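/- Fix δ ∈ (θ/2, 1/2 − θ) and set ε = (1/2 − θ − δ)/2. For ζ ∈ ℤ²∖{0} let B_ζ = {ξ ∈ ℤ² : |⟨ξ,ζ⟩| ≤ |ξ|^{2δ}}, and define S' = {n ∈ S : for every ζ ∈ ℤ²∖{0} with |ζ| ≤ n^ε one has A(n, n^δ) ∩ B_ζ = ∅}. Then there is a constant C > 0 such that #{m ∈ S∖S' : m ≤ X} ≤ C · X^{1/2+δ+θ+ε} for all X ≥ 2; in particular, since 1/2 + δ + θ + ε < 1, the set S' has density 1 in S. -/

import Mathlib

open Real MeasureTheory Filter Finset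

noncomputable section

/-- `m` is a sum of two integer squares. -/
def IsSum2Sq (m : ℕ) : Prop := ∃ a b : ℤ, (m : ℤ) = a ^ 2 + b ^ 2

/-- The increasing enumeration `n₀ < n₁ < ⋯` of `S = {4π²m : m a sum of two squares}`. -/
noncomputable def nseq (k : ℕ) : ℝ := 4 * Real.pi ^ 2 * (Nat.nth IsSum2Sq k)

/-- The set `S` of Laplace eigenvalues of the standard torus. -/
def Sset : Set ℝ := Set.range nseq

/-- The number of elements of `S'` (a subset of `S`) that are `≤ X`. -/
noncomputable def countLE (S' : Set ℝ) (X : ℝ) : ℕ :=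
  Nat.card {k : ℕ // nseq k ∈ S' ∧ nseq k ≤ X}

/-- `S' ⊆ S` has density one in `S`. -/
def HasDensityOne (S' : Set ℝ) : Prop :=
  Tendsto (fun X : ℝ => (countLE S' X : ℝ) / (countLE Sset X)) atTop (nhds 1)

/-- The Euclidean norm of a lattice vector. -/
noncomputable def znorm (ξ : Fin 2 → ℤ) : ℝ := Real.sqrt (∑ i, (ξ i : ℝ) ^ 2)

/-- Huxley's exponent in the circle law. -/
noncomputable def θH : ℝ := 133 / 416

/-- The set of "bad" lattice points attached to `ζ ≠ 0`:
`B_ζ = {ξ ∈ ℤ² : |⟨ξ,ζ⟩| ≤ |ξ|^{2δ}}`. -/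
def badSet (δ : ℝ) (ζ : Fin 2 → ℤ) : Set (Fin 2 → ℤ) :=
  {ξ | |∑ i, (ξ i : ℝ) * (ζ i : ℝ)| ≤ (znorm ξ) ^ (2 * δ)}

/-- The annulus `A(n, L) = {ξ ∈ ℤ² : |4π²|ξ|² − n| ≤ L}`. -/
def annulus (n L : ℝ) : Set (Fin 2 → ℤ) :=
  {ξ | |4 * Real.pi ^ 2 * (∑ i, (ξ i : ℝ) ^ 2) - n| ≤ L}

/-- The good subsequence `S' ⊆ S`: those `n ∈ S` for which the annulus `A(n, n^δ)` avoids all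
bad sets `B_ζ`, `0 ≠ |ζ| ≤ n^ε`. -/
def goodSet (δ ε : ℝ) : Set ℝ :=
  {n ∈ Sset | ∀ ζ : Fin 2 → ℤ, ζ ≠ 0 → znorm ζ ≤ n ^ ε →
    annulus n (n ^ δ) ∩ badSet δ ζ = ∅}

lemma isSum2Sq_infinite : {m : ℕ | IsSum2Sq m}.Infinite := by
  apply Set.infinite_of_injective_forall_mem (f := fun j : ℕ => j ^ 2)
  · exact Nat.pow_left_injective (by norm_num)
  · intro j; exact ⟨j, 0, by push_cast; ring⟩

lemma one_le_four_pi_sq : (1:ℝ) ≤ 4 * Real.pi ^ 2 := by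
  nlinarith [Real.pi_gt_three]

lemma le_nseq (k : ℕ) : (k : ℝ) ≤ nseq k := by
  have h1 : (k:ℝ) ≤ (Nat.nth IsSum2Sq k : ℝ) := by
    exact_mod_cast (Nat.nth_strictMono isSum2Sq_infinite).le_apply
  have h2 : (Nat.nth IsSum2Sq k : ℝ) ≤ 4 * Real.pi ^ 2 * (Nat.nth IsSum2Sq k) :=
    le_mul_of_one_le_left (Nat.cast_nonneg _) one_le_four_pi_sq
  exact h1.trans h2

lemma finite_countSet (S' : Set ℝ) (X : ℝ) : {k : ℕ | nseq k ∈ S' ∧ nseq k ≤ X}.Finite := by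
  apply (Set.finite_Iic ⌊X⌋₊).subset
  intro k hk
  exact Set.mem_Iic.2 (Nat.le_floor ((le_nseq k).trans hk.2))

instance finite_countSubtype (S' : Set ℝ) (X : ℝ) : Finite {k : ℕ // nseq k ∈ S' ∧ nseq k ≤ X} :=
  (finite_countSet S' X).to_subtype

lemma countLE_mono {S' S'' : Set ℝ} (h : S' ⊆ S'') (X : ℝ) : countLE S' X ≤ countLE S'' X :=
  Nat.card_le_card_of_injective
    (fun k => (⟨k.1, h k.2.1, k.2.2⟩ : {k : ℕ // nseq k ∈ S'' ∧ nseq k ≤ X}))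
    (fun a b hab => by simpa [Subtype.ext_iff] using hab)


lemma two_le_four_pi_sq : (2:ℝ) ≤ 4 * Real.pi ^ 2 := by nlinarith [Real.pi_gt_three]

instance finCS (S' : Set ℝ) (X : ℝ) : Finite {k : ℕ // nseq k ∈ S' ∧ nseq k ≤ X} :=
  (finite_countSet S' X).to_subtype

lemma countLE_eq_ncard (S' : Set ℝ) (X : ℝ) :
    countLE S' X = ({k : ℕ | nseq k ∈ S' ∧ nseq k ≤ X}).ncard := by
  rw [countLE, ← Nat.card_coe_set_eq]
  rfl

lemma countLE_split (G : Set ℝ) (hG : G ⊆ Sset) (X : ℝ) :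
    countLE Sset X = countLE G X + countLE (Sset \ G) X := by
  have h1 : {k : ℕ | nseq k ∈ Sset ∧ nseq k ≤ X}
      = {k | nseq k ∈ G ∧ nseq k ≤ X} ∪ {k | nseq k ∈ Sset \ G ∧ nseq k ≤ X} := by
    ext k
    constructor
    · rintro ⟨hs, hx⟩
      by_cases hg : nseq k ∈ G
      · exact Or.inl ⟨hg, hx⟩
      · exact Or.inr ⟨⟨hs, hg⟩, hx⟩
    · rintro (⟨hg, hx⟩ | ⟨hb, hx⟩)
      · exact ⟨hG hg, hx⟩
      · exact ⟨hb.1, hx⟩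
  have hd : Disjoint {k : ℕ | nseq k ∈ G ∧ nseq k ≤ X} {k | nseq k ∈ Sset \ G ∧ nseq k ≤ X} := by
    rw [Set.disjoint_left]
    rintro k ⟨hg, _⟩ ⟨hb, _⟩
    exact hb.2 hg
  rw [countLE_eq_ncard, countLE_eq_ncard, countLE_eq_ncard, h1,
    Set.ncard_union_eq hd (finite_countSet G X) (finite_countSet _ X)]

set_option maxHeartbeats 2000000 in
open scoped Classical in
lemma count_lower (X : ℝ) (N : ℕ) (hNX : 4 * Real.pi ^ 2 * N ≤ X) :
    (((Finset.range (N+1)).filter IsSum2Sq).card) ≤ countLE Sset X := by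
  rw [← Nat.card_eq_finsetCard]
  have hmem : ∀ m : {x // x ∈ (Finset.range (N+1)).filter IsSum2Sq},
      nseq (Nat.count IsSum2Sq m.1) ∈ Sset ∧ nseq (Nat.count IsSum2Sq m.1) ≤ X := by
    rintro ⟨m, hm⟩
    simp only [Finset.mem_filter, Finset.mem_range] at hm
    have key : nseq (Nat.count IsSum2Sq m) = 4 * Real.pi ^ 2 * m := by
      simp [nseq, Nat.nth_count hm.2]
    refine ⟨⟨Nat.count IsSum2Sq m, rfl⟩, ?_⟩
    rw [key]
    have hm' : (m:ℝ) ≤ N := by exact_mod_cast Nat.lt_succ_iff.mp hm.1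
    calc 4 * Real.pi ^ 2 * m ≤ 4 * Real.pi ^ 2 * N := by
          apply mul_le_mul_of_nonneg_left hm'
          positivity
      _ ≤ X := hNX
  unfold countLE
  refine @Nat.card_le_card_of_injective _ _ (finCS Sset X)
    (fun m => (⟨Nat.count IsSum2Sq m.1, hmem m⟩ : {k : ℕ // nseq k ∈ Sset ∧ nseq k ≤ X})) ?_
  intro a b hab
  have h1 : Nat.count IsSum2Sq a.1 = Nat.count IsSum2Sq b.1 := by
    simpa [Subtype.ext_iff] using hab
  have h2 := congrArg (Nat.nth IsSum2Sq) h1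
  have ha := (Finset.mem_filter.mp a.2).2
  have hb := (Finset.mem_filter.mp b.2).2
  rw [Nat.nth_count ha, Nat.nth_count hb] at h2
  exact Subtype.ext h2


lemma znorm_nonneg (v : Fin 2 → ℤ) : 0 ≤ znorm v := Real.sqrt_nonneg _

lemma sq_coord_le_sum (v : Fin 2 → ℤ) (i : Fin 2) :
    (v i : ℝ) ^ 2 ≤ ∑ j, (v j : ℝ) ^ 2 :=
  Finset.single_le_sum (f := fun j => (v j : ℝ) ^ 2) (fun j _ => sq_nonneg _) (Finset.mem_univ i)

lemma abs_coord_le_znorm (v : Fin 2 → ℤ) (i : Fin 2) : |(v i : ℝ)| ≤ znorm v := by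
  rw [znorm, ← Real.sqrt_sq_eq_abs]
  exact Real.sqrt_le_sqrt (sq_coord_le_sum v i)

lemma nseq_nonneg (k : ℕ) : 0 ≤ nseq k := by unfold nseq; positivity

lemma bad_count (δ ε : ℝ) (hδ0 : 0 < δ) (hδ1 : δ ≤ 1) (hε0 : 0 ≤ ε)
    (X : ℝ) (hX : 2 ≤ X) :
    (countLE (Sset \ goodSet δ ε) X : ℝ) ≤ 405 * X ^ ((1:ℝ)/2 + 2*δ + 2*ε) := by
  have hX0 : (0:ℝ) < X := by linarith
  have hX1 : (1:ℝ) ≤ X := by linarith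
  have hXe1 : (1:ℝ) ≤ X ^ ε := Real.one_le_rpow hX1 hε0
  have hXd1 : (1:ℝ) ≤ X ^ δ := Real.one_le_rpow hX1 hδ0.le
  have hXdX : X ^ δ ≤ X := by
    calc X ^ δ ≤ X ^ (1:ℝ) := Real.rpow_le_rpow_of_exponent_le hX1 hδ1
    _ = X := Real.rpow_one X
  set A : ℤ := ⌊X ^ ε⌋ with hA
  set B : ℤ := ⌊X ^ δ⌋ with hB
  set Cc : ℤ := ⌊Real.sqrt X⌋ with hCc
  set D : ℤ := ⌈X ^ δ⌉ with hD
  set T : Finset ((ℤ × ℤ) × ℤ × ℤ × ℤ) :=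
    (Icc (-A) A ×ˢ Icc (-A) A) ×ˢ Icc (-B) B ×ˢ Icc (-Cc) Cc ×ˢ Icc 0 (2*D) with hT
  -- Step 1 : extract witnesses
  have exdata : ∀ k : {k : ℕ // nseq k ∈ Sset \ goodSet δ ε ∧ nseq k ≤ X},
      ∃ p : (Fin 2 → ℤ) × (Fin 2 → ℤ), p.1 ≠ 0 ∧ znorm p.1 ≤ (nseq k.1) ^ ε ∧
        p.2 ∈ annulus (nseq k.1) ((nseq k.1) ^ δ) ∧ p.2 ∈ badSet δ p.1 := by
    rintro ⟨k, ⟨hS, hG⟩, hX'⟩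
    have hnp : ¬ (∀ ζ : Fin 2 → ℤ, ζ ≠ 0 → znorm ζ ≤ (nseq k) ^ ε →
        annulus (nseq k) ((nseq k) ^ δ) ∩ badSet δ ζ = ∅) := fun hP => hG ⟨hS, hP⟩
    push_neg at hnp
    obtain ⟨ζ, hζ0, hζn, hne⟩ := hnp
    obtain ⟨ξ, hξ⟩ := hne
    exact ⟨(ζ, ξ), hζ0, hζn, hξ.1, hξ.2⟩
  set ζf := fun k => (Classical.choose (exdata k)).1 with hζf
  set ξf := fun k => (Classical.choose (exdata k)).2 with hξf
  have spec : ∀ k, ζf k ≠ 0 ∧ znorm (ζf k) ≤ (nseq k.1) ^ ε ∧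
      ξf k ∈ annulus (nseq k.1) ((nseq k.1) ^ δ) ∧ ξf k ∈ badSet δ (ζf k) :=
    fun k => Classical.choose_spec (exdata k)
  set S2 := fun k => ∑ i, (ξf k i) ^ 2 with hS2
  set tf := fun k => ∑ i, (ξf k i) * (ζf k i) with htf
  set mf := fun k : {k : ℕ // nseq k ∈ Sset \ goodSet δ ε ∧ nseq k ≤ X} =>
    Nat.nth IsSum2Sq k.1 with hmf
  set Φ := fun k => ((ζf k 0, ζf k 1), tf k,
    (if ζf k 0 = 0 then ξf k 0 else ξf k 1), (mf k : ℤ) - S2 k + D) with hΦ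
  -- membership
  have facts : ∀ k, Φ k ∈ T := by
    intro k
    obtain ⟨hζ0, hζn, hann, hbadm⟩ := spec k
    have hn0 : 0 ≤ nseq k.1 := nseq_nonneg k.1
    have hnX : nseq k.1 ≤ X := k.2.2
    have hne' : (nseq k.1) ^ ε ≤ X ^ ε := Real.rpow_le_rpow hn0 hnX hε0
    have hnd' : (nseq k.1) ^ δ ≤ X ^ δ := Real.rpow_le_rpow hn0 hnX hδ0.le
    have hζmem : ∀ i, ζf k i ∈ Icc (-A) A := by
      intro i
      have h1 := abs_le.mp (((abs_coord_le_znorm _ i).trans hζn).trans hne')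
      refine mem_Icc.2 ⟨?_, Int.le_floor.2 h1.2⟩
      rw [neg_le]
      exact Int.le_floor.2 (by push_cast; linarith [h1.1])
    -- annulus data
    have hcast : ((S2 k : ℤ) : ℝ) = ∑ i, (ξf k i : ℝ) ^ 2 := by
      simp [hS2]
    have hannR : |4 * Real.pi ^ 2 * ((S2 k : ℤ) : ℝ) - nseq k.1| ≤ X ^ δ := by
      rw [hcast]; exact le_trans hann hnd'
    have hnm : nseq k.1 = 4 * Real.pi ^ 2 * (mf k : ℝ) := rfl
    have hS20 : (0:ℝ) ≤ ((S2 k : ℤ) : ℝ) := by rw [hcast]; positivity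
    have hS2X : ((S2 k : ℤ) : ℝ) ≤ X := by
      have h2 := abs_le.mp hannR
      nlinarith [two_le_four_pi_sq, hS20, hn0]
    -- |S2 - m| ≤ X^δ
    have hS2m : |((S2 k : ℤ) : ℝ) - (mf k : ℝ)| ≤ X ^ δ := by
      have h6 : |4 * Real.pi ^ 2 * (((S2 k : ℤ) : ℝ) - (mf k : ℝ))| ≤ X ^ δ := by
        rw [mul_sub]
        rw [hnm] at hannR
        exact hannR
      rw [abs_mul, abs_of_pos (by positivity : (0:ℝ) < 4 * Real.pi ^ 2)] at h6
      nlinarith [abs_nonneg (((S2 k : ℤ) : ℝ) - (mf k : ℝ)), one_le_four_pi_sq]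
    have hrmem : (mf k : ℤ) - S2 k + D ∈ Icc (0:ℤ) (2*D) := by
      have h7 : |(mf k : ℤ) - S2 k| ≤ D := by
        have h9 : |((((mf k : ℤ) - S2 k) : ℤ) : ℝ)| ≤ (D : ℝ) := by
          push_cast
          rw [abs_sub_comm]
          push_cast at hS2m
          exact hS2m.trans (Int.le_ceil _)
        exact_mod_cast h9
      rw [mem_Icc]
      rw [abs_le] at h7
      omega
    -- coordinates of ξ
    have hξmem : ∀ i, ξf k i ∈ Icc (-Cc) Cc := by
      intro i
      have h10 : ((ξf k i : ℝ)) ^ 2 ≤ X := by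
        have := sq_coord_le_sum (ξf k) i
        rw [← hcast] at this
        linarith
      have h11 := abs_le.mp (by
        calc |(ξf k i : ℝ)| ≤ Real.sqrt X := Real.abs_le_sqrt h10
        _ = Real.sqrt X := rfl)
      refine mem_Icc.2 ⟨?_, Int.le_floor.2 h11.2⟩
      rw [neg_le]
      exact Int.le_floor.2 (by push_cast; linarith [h11.1])
    -- inner product bound
    have hznX : znorm (ξf k) ≤ Real.sqrt X := by
      rw [znorm, ← hcast]
      exact Real.sqrt_le_sqrt hS2X
    have hsx : Real.sqrt X ^ (2*δ) = X ^ δ := by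
      rw [Real.sqrt_eq_rpow, ← Real.rpow_mul hX0.le]
      congr 1
      ring
    have htmem : tf k ∈ Icc (-B) B := by
      have h12 : |((tf k : ℤ) : ℝ)| ≤ X ^ δ := by
        have h13 : ((tf k : ℤ) : ℝ) = ∑ i, (ξf k i : ℝ) * (ζf k i : ℝ) := by simp [htf]
        rw [h13]
        calc |∑ i, (ξf k i : ℝ) * (ζf k i : ℝ)| ≤ znorm (ξf k) ^ (2*δ) := hbadm
        _ ≤ Real.sqrt X ^ (2*δ) :=
            Real.rpow_le_rpow (znorm_nonneg _) hznX (by positivity)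
        _ = X ^ δ := hsx
      have h14 := abs_le.mp h12
      refine mem_Icc.2 ⟨?_, Int.le_floor.2 h14.2⟩
      rw [neg_le]
      exact Int.le_floor.2 (by push_cast; linarith [h14.1])
    -- assemble
    rw [hT]
    simp only [hΦ, Finset.mem_product]
    refine ⟨⟨hζmem 0, hζmem 1⟩, htmem, ?_, hrmem⟩
    split_ifs <;> exact hξmem _
  -- injectivity
  have hinj : Function.Injective Φ := by
    intro a b hab
    simp only [hΦ, Prod.mk.injEq] at hab
    obtain ⟨⟨h0, h1⟩, ht, hu, hr⟩ := hab
    have hξab : ξf a = ξf b := by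
      have e1 : ξf a 0 * ζf a 0 + ξf a 1 * ζf a 1 = ξf b 0 * ζf b 0 + ξf b 1 * ζf b 1 := by
        have := ht
        simp only [htf, Fin.sum_univ_two] at this
        exact this
      rw [← h0, ← h1] at e1
      by_cases hz : ζf a 0 = 0
      · have hz' : ζf b 0 = 0 := by rw [← h0]; exact hz
        rw [if_pos hz, if_pos hz'] at hu
        have hζ1 : ζf a 1 ≠ 0 := by
          intro hzz
          apply (spec a).1
          funext j; fin_cases j
          · exact hz
          · exact hzz
        rw [hz] at e1
        simp only [mul_zero, zero_add] at e1
        have e2 : ξf a 1 = ξf b 1 := mul_right_cancel₀ hζ1 e1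
        funext i; fin_cases i
        · exact hu
        · exact e2
      · have hz' : ¬ (ζf b 0 = 0) := by rw [← h0]; exact hz
        rw [if_neg hz, if_neg hz'] at hu
        rw [hu] at e1
        have e2 : ξf a 0 = ξf b 0 := by
          have e3 : ξf a 0 * ζf a 0 = ξf b 0 * ζf a 0 := by linarith [e1]
          exact mul_right_cancel₀ hz e3
        funext i; fin_cases i
        · exact e2
        · exact hu
    have hS2ab : S2 a = S2 b := by simp only [hS2, hξab]
    have hm : mf a = mf b := by
      rw [hS2ab] at hr
      omega
    simp only [hmf] at hm
    exact Subtype.ext (Nat.nth_injective isSum2Sq_infinite hm)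
  -- cardinality step
  have step1 : countLE (Sset \ goodSet δ ε) X ≤ T.card := by
    rw [← Nat.card_eq_finsetCard]
    unfold countLE
    refine @Nat.card_le_card_of_injective _ _ inferInstance
      (fun k => (⟨Φ k, facts k⟩ : {x // x ∈ T})) ?_
    intro a b hab
    exact hinj (by simpa [Subtype.ext_iff] using hab)
  -- bounds on the integers
  have hAx : ((A:ℤ):ℝ) ≤ X ^ ε := Int.floor_le _
  have hBx : ((B:ℤ):ℝ) ≤ X ^ δ := Int.floor_le _
  have hCx : ((Cc:ℤ):ℝ) ≤ X ^ ((1:ℝ)/2) := by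
    rw [← Real.sqrt_eq_rpow]
    exact Int.floor_le _
  have hDx : ((D:ℤ):ℝ) ≤ X ^ δ + 1 := (Int.ceil_lt_add_one _).le
  have hXh1 : (1:ℝ) ≤ X ^ ((1:ℝ)/2) := Real.one_le_rpow hX1 (by norm_num)
  have htn : ∀ (x : ℤ) (y : ℝ), (x:ℝ) ≤ y → 0 ≤ y → ((x.toNat : ℕ) : ℝ) ≤ y := by
    intro x y hxy hy
    rcases le_or_gt 0 x with h | h
    · have e : ((x.toNat : ℕ) : ℝ) = ((x.toNat : ℤ) : ℝ) := by push_cast; ring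
      rw [e, Int.toNat_of_nonneg h]
      exact hxy
    · rw [Int.toNat_of_nonpos h.le]
      simpa using hy
  have e2 : (T.card : ℝ) = ((A+1 - -A).toNat : ℝ) * ((A+1 - -A).toNat : ℝ) *
      (((B+1 - -B).toNat : ℝ) * (((Cc+1 - -Cc).toNat : ℝ) * ((2*D+1 - 0).toNat : ℝ))) := by
    rw [hT]
    simp only [Finset.card_product, Int.card_Icc]
    push_cast
    ring
  have hXsum : X ^ ((1:ℝ)/2 + 2*δ + 2*ε)
      = X ^ ε * X ^ ε * (X ^ δ * (X ^ ((1:ℝ)/2) * X ^ δ)) := by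
    rw [← Real.rpow_add hX0, ← Real.rpow_add hX0, ← Real.rpow_add hX0, ← Real.rpow_add hX0]
    congr 1
    ring
  have hTcard : (T.card : ℝ) ≤ 405 * X ^ ((1:ℝ)/2 + 2*δ + 2*ε) := by
    rw [e2]
    have b1 : ((A+1 - -A).toNat : ℝ) ≤ 3 * X ^ ε := by
      apply htn
      · push_cast; linarith
      · positivity
    have b2 : ((B+1 - -B).toNat : ℝ) ≤ 3 * X ^ δ := by
      apply htn
      · push_cast; linarith
      · positivity
    have b3 : ((Cc+1 - -Cc).toNat : ℝ) ≤ 3 * X ^ ((1:ℝ)/2) := by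
      apply htn
      · push_cast; linarith
      · positivity
    have b4 : ((2*D+1 - 0).toNat : ℝ) ≤ 5 * X ^ δ := by
      apply htn
      · push_cast; linarith
      · positivity
    calc ((A+1 - -A).toNat : ℝ) * ((A+1 - -A).toNat : ℝ) *
        (((B+1 - -B).toNat : ℝ) * (((Cc+1 - -Cc).toNat : ℝ) * ((2*D+1 - 0).toNat : ℝ)))
        ≤ (3 * X ^ ε) * (3 * X ^ ε) * ((3 * X ^ δ) * ((3 * X ^ ((1:ℝ)/2)) * (5 * X ^ δ))) := by
          gcongr <;> positivity
      _ = 405 * X ^ ((1:ℝ)/2 + 2*δ + 2*ε) := by rw [hXsum]; ring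
  calc (countLE (Sset \ goodSet δ ε) X : ℝ) ≤ (T.card : ℝ) := by exact_mod_cast step1
    _ ≤ 405 * X ^ ((1:ℝ)/2 + 2*δ + 2*ε) := hTcard


open scoped Classical in
lemma rep_lower (K : ℕ) (hK : 1 ≤ K) :
    (((K:ℝ)+1)^2)^2 ≤ (((Finset.range (2*K^2+1)).filter IsSum2Sq).card : ℝ) *
      (((K:ℝ)+1)^2 + 2 * (2*(K:ℝ) * (1 + Real.log (2*(K:ℝ))))^2) := by
  set P : Finset (ℕ × ℕ) := Finset.range (K+1) ×ˢ Finset.range (K+1) with hP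
  set fsq : ℕ × ℕ → ℕ := fun p => p.1^2 + p.2^2 with hfsq
  set V : Finset ℕ := (Finset.range (2*K^2+1)).filter IsSum2Sq with hV
  set W : Finset ((ℕ×ℕ) × (ℕ×ℕ)) := (P ×ˢ P).filter (fun q => fsq q.1 = fsq q.2) with hW
  set E : Finset (ℕ × ℕ) := ((Icc 1 (2*K)) ×ˢ (Icc 1 (2*K))).filter (fun uv => uv.2 ∣ uv.1) with hE
  have hmapsV : ∀ p ∈ P, fsq p ∈ V := by
    rintro ⟨a, b⟩ hp
    rw [hP, Finset.mem_product, Finset.mem_range, Finset.mem_range] at hp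
    rw [hV, Finset.mem_filter, Finset.mem_range]
    constructor
    · have ha : a ≤ K := by omega
      have hb : b ≤ K := by omega
      have : a^2 + b^2 ≤ 2*K^2 := by nlinarith
      simp only [hfsq]
      omega
    · exact ⟨a, b, by push_cast [hfsq]; ring⟩
  -- card P = sum of fibers
  have hPcard : P.card = ∑ m ∈ V, (P.filter (fun p => fsq p = m)).card :=
    Finset.card_eq_sum_card_fiberwise hmapsV
  -- W card = sum of fiber squares
  have hWcard : W.card = ∑ m ∈ V, ((P.filter (fun p => fsq p = m)).card)^2 := by
    have h1 : W.card = ∑ m ∈ V, (W.filter (fun q => fsq q.1 = m)).card :=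
      Finset.card_eq_sum_card_fiberwise (by
        rintro q hq
        rw [Finset.mem_coe, hW, Finset.mem_filter, Finset.mem_product] at hq
        exact hmapsV q.1 hq.1.1)
    rw [h1]
    apply Finset.sum_congr rfl
    intro m hm
    have h2 : W.filter (fun q => fsq q.1 = m)
        = (P.filter (fun p => fsq p = m)) ×ˢ (P.filter (fun p => fsq p = m)) := by
      ext q
      simp only [hW, Finset.mem_filter, Finset.mem_product]
      constructor
      · rintro ⟨⟨⟨hq1, hq2⟩, he⟩, hm1⟩
        exact ⟨⟨hq1, hm1⟩, hq2, by rw [← he]; exact hm1⟩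
      · rintro ⟨⟨hq1, hm1⟩, hq2, hm2⟩
        exact ⟨⟨⟨hq1, hq2⟩, by rw [hm1, hm2]⟩, hm1⟩
    rw [h2, Finset.card_product, sq]
  -- diagonal part
  have hdiag : (W.filter (fun q => q.1.1 = q.2.1)).card ≤ P.card := by
    apply Finset.card_le_card_of_injOn (fun q => q.1)
    · rintro q hq
      rw [Finset.mem_coe, Finset.mem_filter, hW, Finset.mem_filter, Finset.mem_product] at hq
      exact hq.1.1.1
    · rintro q hq q' hq' he
      simp only [Finset.mem_coe, Finset.mem_filter, hW, Finset.mem_product] at hq hq'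
      have hqq : q.2 = q.1 := by
        have h3 : q.1.1 = q.2.1 := hq.2
        have h4 : fsq q.1 = fsq q.2 := hq.1.2
        simp only [hfsq] at h4
        rw [← h3] at h4
        have h5 : q.1.2^2 = q.2.2^2 := by omega
        have : q.1.2 = q.2.2 := Nat.pow_left_injective (by norm_num) h5
        exact Prod.ext h3.symm this.symm
      have hqq' : q'.2 = q'.1 := by
        have h3 : q'.1.1 = q'.2.1 := hq'.2
        have h4 : fsq q'.1 = fsq q'.2 := hq'.1.2
        simp only [hfsq] at h4
        rw [← h3] at h4
        have h5 : q'.1.2^2 = q'.2.2^2 := by omega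
        have : q'.1.2 = q'.2.2 := Nat.pow_left_injective (by norm_num) h5
        exact Prod.ext h3.symm this.symm
      have he' : q.1 = q'.1 := he
      exact Prod.ext he' (by rw [hqq, hqq', he'])
  -- key facts on the strictly-lower part
  set W2 : Finset ((ℕ×ℕ) × (ℕ×ℕ)) := W.filter (fun q => q.2.1 < q.1.1) with hW2
  have keyfacts : ∀ q ∈ W2,
      q.2.1 < q.1.1 ∧ q.1.1 ≤ K ∧ q.1.2 ≤ K ∧ q.2.1 ≤ K ∧ q.2.2 ≤ K ∧ q.1.2 < q.2.2 ∧
      (q.1.1 - q.2.1) * (q.1.1 + q.2.1) = (q.2.2 - q.1.2) * (q.2.2 + q.1.2) := by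
    intro q hq
    rw [hW2, Finset.mem_filter, hW, Finset.mem_filter, Finset.mem_product] at hq
    obtain ⟨⟨⟨hq1, hq2⟩, hfe⟩, hac⟩ := hq
    rw [hP, Finset.mem_product, Finset.mem_range, Finset.mem_range] at hq1 hq2
    simp only [hfsq] at hfe
    have hcc : q.2.1 ^ 2 < q.1.1 ^ 2 := Nat.pow_lt_pow_left hac (by norm_num)
    have hbd : q.1.2 < q.2.2 := by
      by_contra hbd
      push_neg at hbd
      have := Nat.pow_le_pow_left hbd 2
      omega
    refine ⟨hac, by omega, by omega, by omega, by omega, hbd, ?_⟩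
    have e1 : q.1.1 ^ 2 - q.2.1 ^ 2 = (q.1.1 + q.2.1) * (q.1.1 - q.2.1) := Nat.sq_sub_sq _ _
    have e2 : q.2.2 ^ 2 - q.1.2 ^ 2 = (q.2.2 + q.1.2) * (q.2.2 - q.1.2) := Nat.sq_sub_sq _ _
    have e3 : q.1.1 ^ 2 - q.2.1 ^ 2 = q.2.2 ^ 2 - q.1.2 ^ 2 := by omega
    calc (q.1.1 - q.2.1) * (q.1.1 + q.2.1) = (q.1.1 + q.2.1) * (q.1.1 - q.2.1) := by ring
      _ = (q.2.2 + q.1.2) * (q.2.2 - q.1.2) := by rw [← e1, e3, e2]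
      _ = (q.2.2 - q.1.2) * (q.2.2 + q.1.2) := by ring
  have hex : ∀ q : (ℕ×ℕ) × (ℕ×ℕ), ∃ v : ℕ × ℕ, q ∈ W2 →
      (v.1 ∣ q.1.1 - q.2.1 ∧ v.2 ∣ q.1.1 + q.2.1 ∧ q.2.2 - q.1.2 = v.1 * v.2) := by
    intro q
    by_cases hq : q ∈ W2
    · obtain ⟨hac, ha, hb, hc, hd, hbd, heq⟩ := keyfacts q hq
      have hdvd : (q.2.2 - q.1.2) ∣ (q.1.1 - q.2.1) * (q.1.1 + q.2.1) :=
        ⟨q.2.2 + q.1.2, heq⟩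
      obtain ⟨v₁, v₂, h1, h2, h3⟩ := exists_dvd_and_dvd_of_dvd_mul hdvd
      exact ⟨(v₁, v₂), fun _ => ⟨h1, h2, h3⟩⟩
    · exact ⟨(1,1), fun h => absurd h hq⟩
  have hoff : W2.card ≤ E.card * E.card := by
    rw [← Finset.card_product]
    apply Finset.card_le_card_of_injOn (fun q =>
      ((q.1.1 - q.2.1, (Classical.choose (hex q)).1),
       (q.1.1 + q.2.1, (Classical.choose (hex q)).2)))
    · intro q hq
      obtain ⟨hac, ha, hb, hc, hd, hbd, heq⟩ := keyfacts q hq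
      obtain ⟨h1, h2, h3⟩ := Classical.choose_spec (hex q) hq
      have hu1 : 1 ≤ q.1.1 - q.2.1 := by omega
      have hs1 : 1 ≤ q.1.1 + q.2.1 := by omega
      have m1 : 1 ≤ q.1.1 - q.2.1 ∧ q.1.1 - q.2.1 ≤ 2*K := by omega
      have m2 : 1 ≤ (Classical.choose (hex q)).1 ∧ (Classical.choose (hex q)).1 ≤ 2*K :=
        ⟨Nat.pos_of_dvd_of_pos h1 hu1, (Nat.le_of_dvd hu1 h1).trans (by omega)⟩
      have m3 : 1 ≤ q.1.1 + q.2.1 ∧ q.1.1 + q.2.1 ≤ 2*K := by omega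
      have m4 : 1 ≤ (Classical.choose (hex q)).2 ∧ (Classical.choose (hex q)).2 ≤ 2*K :=
        ⟨Nat.pos_of_dvd_of_pos h2 hs1, (Nat.le_of_dvd hs1 h2).trans (by omega)⟩
      simp only [Finset.mem_coe, Finset.mem_product, hE, Finset.mem_filter, Finset.mem_Icc]
      exact ⟨⟨⟨m1, m2⟩, h1⟩, ⟨m3, m4⟩, h2⟩
    · intro q hq q' hq' he
      simp only [Finset.mem_coe] at hq hq'
      obtain ⟨hac, ha, hb, hc, hd, hbd, heq⟩ := keyfacts q hq
      obtain ⟨hac', ha', hb', hc', hd', hbd', heq'⟩ := keyfacts q' hq'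
      obtain ⟨h1, h2, h3⟩ := Classical.choose_spec (hex q) hq
      obtain ⟨h1', h2', h3'⟩ := Classical.choose_spec (hex q') hq'
      have e4 : q.1.1 - q.2.1 = q'.1.1 - q'.2.1 := congrArg (fun z => z.1.1) he
      have e5 : q.1.1 + q.2.1 = q'.1.1 + q'.2.1 := congrArg (fun z => z.2.1) he
      have e6 : (Classical.choose (hex q)).1 = (Classical.choose (hex q')).1 :=
        congrArg (fun z => z.1.2) he
      have e7 : (Classical.choose (hex q)).2 = (Classical.choose (hex q')).2 :=
        congrArg (fun z => z.2.2) he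
      have ev : q.2.2 - q.1.2 = q'.2.2 - q'.1.2 := by rw [h3, h3', e6, e7]
      have evpos : 1 ≤ q.2.2 - q.1.2 := by omega
      have et : q.2.2 + q.1.2 = q'.2.2 + q'.1.2 := by
        have e8 : (q.2.2 - q.1.2) * (q.2.2 + q.1.2) = (q.2.2 - q.1.2) * (q'.2.2 + q'.1.2) := by
          rw [← heq, e4, e5, heq', ev]
        exact Nat.eq_of_mul_eq_mul_left (by omega) e8
      have : q.1.1 = q'.1.1 ∧ q.2.1 = q'.2.1 ∧ q.1.2 = q'.1.2 ∧ q.2.2 = q'.2.2 := by omega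
      exact Prod.ext (Prod.ext this.1 this.2.2.1) (Prod.ext this.2.1 this.2.2.2)
  -- swap bound
  have hswap : (W.filter (fun q => q.1.1 < q.2.1)).card ≤ W2.card := by
    apply Finset.card_le_card_of_injOn (fun q => (q.2, q.1))
    · intro q hq
      rw [Finset.mem_coe, Finset.mem_filter, hW, Finset.mem_filter, Finset.mem_product] at hq
      rw [hW2, Finset.mem_coe, Finset.mem_filter, hW, Finset.mem_filter, Finset.mem_product]
      exact ⟨⟨⟨hq.1.1.2, hq.1.1.1⟩, hq.1.2.symm⟩, hq.2⟩
    · intro q _ q' _ he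
      have e1 : q.2 = q'.2 := congrArg (fun z => z.1) he
      have e2 : q.1 = q'.1 := congrArg (fun z => z.2) he
      exact Prod.ext e2 e1
  -- total bound on W
  have hWle : W.card ≤ P.card + 2 * (E.card * E.card) := by
    have hsub : W ⊆ (W.filter (fun q => q.1.1 = q.2.1)) ∪
        (W2 ∪ (W.filter (fun q => q.1.1 < q.2.1))) := by
      intro q hq
      rw [Finset.mem_union, Finset.mem_union, hW2]
      rcases Nat.lt_trichotomy q.1.1 q.2.1 with h | h | h
      · exact Or.inr (Or.inr (Finset.mem_filter.2 ⟨hq, h⟩))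
      · exact Or.inl (Finset.mem_filter.2 ⟨hq, h⟩)
      · exact Or.inr (Or.inl (Finset.mem_filter.2 ⟨hq, h⟩))
    calc W.card ≤ ((W.filter (fun q => q.1.1 = q.2.1)) ∪
        (W2 ∪ (W.filter (fun q => q.1.1 < q.2.1)))).card := Finset.card_le_card hsub
      _ ≤ (W.filter (fun q => q.1.1 = q.2.1)).card +
          ((W2 ∪ (W.filter (fun q => q.1.1 < q.2.1)))).card := Finset.card_union_le _ _
      _ ≤ (W.filter (fun q => q.1.1 = q.2.1)).card +
          (W2.card + (W.filter (fun q => q.1.1 < q.2.1)).card) := by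
          gcongr
          exact Finset.card_union_le _ _
      _ ≤ P.card + 2 * (E.card * E.card) := by
          have := hdiag
          have := hswap
          have := hoff
          omega
  -- E card bound
  have hEcard : (E.card : ℝ) ≤ 2*(K:ℝ) * (1 + Real.log (2*(K:ℝ))) := by
    have h1 : E.card = ∑ d ∈ Icc 1 (2*K), (E.filter (fun uv => uv.2 = d)).card :=
      Finset.card_eq_sum_card_fiberwise (by
        intro uv huv
        rw [Finset.mem_coe, hE, Finset.mem_filter, Finset.mem_product] at huv
        exact huv.1.2)
    have h2 : ∀ d ∈ Icc 1 (2*K), (E.filter (fun uv => uv.2 = d)).card ≤ (2*K) / d := by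
      intro d hd
      rw [← Nat.Ioc_filter_dvd_card_eq_div (2*K) d]
      apply Finset.card_le_card_of_injOn (fun uv => uv.1)
      · intro uv huv
        rw [Finset.mem_coe, Finset.mem_filter, hE, Finset.mem_filter, Finset.mem_product] at huv
        rw [Finset.mem_coe, Finset.mem_filter, Finset.mem_Ioc]
        dsimp only
        have hm := huv.1.1.1
        rw [Finset.mem_Icc] at hm
        refine ⟨⟨by omega, by omega⟩, ?_⟩
        have := huv.1.2
        rw [huv.2] at this
        exact this
      · intro uv h1 uv' h2 he
        simp only [Finset.mem_coe, Finset.mem_filter] at h1 h2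
        have he' : uv.1 = uv'.1 := he
        exact Prod.ext he' (by rw [h1.2, h2.2])
    have h3 : (E.card : ℝ) ≤ ∑ d ∈ Icc 1 (2*K), 2*(K:ℝ) * ((d:ℝ))⁻¹ := by
      rw [h1]
      push_cast
      apply Finset.sum_le_sum
      intro d hd
      calc ((E.filter (fun uv => uv.2 = d)).card : ℝ) ≤ (((2*K) / d : ℕ) : ℝ) := by
            exact_mod_cast h2 d hd
        _ ≤ ((2*K : ℕ):ℝ) / (d:ℝ) := Nat.cast_div_le
        _ = 2*(K:ℝ) * ((d:ℝ))⁻¹ := by push_cast; ring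
    have h4 : ∑ d ∈ Icc 1 (2*K), 2*(K:ℝ) * ((d:ℝ))⁻¹ = 2*(K:ℝ) * ((harmonic (2*K) : ℚ) : ℝ) := by
      rw [← Finset.mul_sum]
      congr 1
      rw [harmonic_eq_sum_Icc]
      push_cast
      rfl
    have h5 : ((harmonic (2*K) : ℚ) : ℝ) ≤ 1 + Real.log (2*(K:ℝ)) := by
      have := harmonic_le_one_add_log (2*K)
      push_cast at this
      convert this using 3
    calc (E.card : ℝ) ≤ ∑ d ∈ Icc 1 (2*K), 2*(K:ℝ) * ((d:ℝ))⁻¹ := h3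
      _ = 2*(K:ℝ) * ((harmonic (2*K) : ℚ) : ℝ) := h4
      _ ≤ 2*(K:ℝ) * (1 + Real.log (2*(K:ℝ))) := by
          apply mul_le_mul_of_nonneg_left h5
          positivity
  -- Cauchy-Schwarz and conclusion
  have hPc : (P.card : ℝ) = ((K:ℝ)+1)^2 := by
    rw [hP, Finset.card_product, Finset.card_range]
    push_cast
    ring
  have cauchy : ((P.card : ℝ))^2 ≤ (V.card : ℝ) * (W.card : ℝ) := by
    have h6 := sq_sum_le_card_mul_sum_sq (s := V)
      (f := fun m => ((P.filter (fun p => fsq p = m)).card : ℝ))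
    have h7 : ∑ m ∈ V, ((P.filter (fun p => fsq p = m)).card : ℝ) = (P.card : ℝ) := by
      rw [hPcard]; push_cast; rfl
    have h8 : ∑ m ∈ V, ((P.filter (fun p => fsq p = m)).card : ℝ)^2 = (W.card : ℝ) := by
      rw [hWcard]; push_cast; rfl
    rw [h7, h8] at h6
    exact h6
  have hlog0 : 0 ≤ 1 + Real.log (2*(K:ℝ)) := by
    have : (1:ℝ) ≤ 2*(K:ℝ) := by
      have : (1:ℝ) ≤ (K:ℝ) := by exact_mod_cast hK
      linarith
    have := Real.log_nonneg this
    linarith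
  have hWr : (W.card : ℝ) ≤ ((K:ℝ)+1)^2 + 2 * (2*(K:ℝ) * (1 + Real.log (2*(K:ℝ))))^2 := by
    have h9 : (W.card : ℝ) ≤ (P.card : ℝ) + 2 * ((E.card : ℝ) * (E.card : ℝ)) := by
      exact_mod_cast hWle
    rw [hPc] at h9
    have h10 : (E.card : ℝ) * (E.card : ℝ) ≤ (2*(K:ℝ) * (1 + Real.log (2*(K:ℝ))))^2 := by
      rw [sq]
      exact mul_le_mul hEcard hEcard (Nat.cast_nonneg _) (by positivity)
    linarith
  calc (((K:ℝ)+1)^2)^2 = ((P.card : ℝ))^2 := by rw [hPc]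
    _ ≤ (V.card : ℝ) * (W.card : ℝ) := cauchy
    _ ≤ (V.card : ℝ) * (((K:ℝ)+1)^2 + 2 * (2*(K:ℝ) * (1 + Real.log (2*(K:ℝ))))^2) := by
        apply mul_le_mul_of_nonneg_left hWr
        positivity


set_option maxHeartbeats 1600000 in
/-- The counting bound for the complement of `S'` in `S`, and the density-one
property of `S'`. -/
theorem good_set_density_one (δ : ℝ) (hδ : δ ∈ Set.Ioo (θH / 2) (1/2 - θH)) :
    (∃ C : ℝ, 0 < C ∧ ∀ X : ℝ, 2 ≤ X →
      (countLE (Sset \ goodSet δ ((1/2 - θH - δ) / 2)) X : ℝ)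
        ≤ C * X ^ (1/2 + δ + θH + (1/2 - θH - δ) / 2)) ∧
    1/2 + δ + θH + (1/2 - θH - δ) / 2 < 1 ∧
    HasDensityOne (goodSet δ ((1/2 - θH - δ) / 2)) := by
  classical
  obtain ⟨hδl, hδu⟩ := hδ
  have hθ : θH = 133/416 := rfl
  set ε : ℝ := (1/2 - θH - δ) / 2 with hε
  have hδ0 : 0 < δ := by rw [hθ] at hδl; linarith
  have hδ1 : δ ≤ 1 := by rw [hθ] at hδu; linarith
  have hε0 : 0 ≤ ε := by rw [hε]; linarith
  set a : ℝ := 1/2 + 2*δ + 2*ε with ha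
  have ha1 : a < 1 := by rw [ha, hε, hθ]; rw [hθ] at hδu; linarith
  have hgoodsub : goodSet δ ε ⊆ Sset := fun n hn => hn.1
  refine ⟨⟨405, by norm_num, ?_⟩, ?_, ?_⟩
  · -- part 1
    intro X hX
    have hX1 : (1:ℝ) ≤ X := by linarith
    calc (countLE (Sset \ goodSet δ ε) X : ℝ) ≤ 405 * X ^ a :=
        bad_count δ ε hδ0 hδ1 hε0 X hX
      _ ≤ 405 * X ^ (1/2 + δ + θH + ε) := by
          have : a ≤ 1/2 + δ + θH + ε := by rw [ha, hε, hθ]; linarith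
          have := Real.rpow_le_rpow_of_exponent_le hX1 this
          linarith
  · -- part 2
    rw [hθ]; rw [hθ] at hδu; linarith
  · -- part 3 : density one
    have hb0 : (0:ℝ) < (1-a)/4 := by linarith
    set b : ℝ := (1-a)/4 with hb
    set c5 : ℝ := 405*57600/b^2 with hc5
    have hkey : ∀ᶠ X : ℝ in atTop, 0 < (countLE Sset X : ℝ) ∧
        (countLE (Sset \ goodSet δ ε) X : ℝ) / (countLE Sset X : ℝ)
          ≤ c5 * X ^ (-((1-a)/2)) := by
      filter_upwards [eventually_ge_atTop (1000:ℝ)] with X hX1000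
      have hX2 : (2:ℝ) ≤ X := by linarith
      have hX0 : (0:ℝ) < X := by linarith
      have hX1 : (1:ℝ) ≤ X := by linarith
      have hlog1 : (1:ℝ) ≤ Real.log X := by
        rw [Real.le_log_iff_exp_le hX0]
        have := Real.exp_one_lt_d9
        linarith
      have hlog0 : (0:ℝ) ≤ Real.log X := by linarith
      set K : ℕ := ⌊Real.sqrt (X/80)⌋₊ with hK
      have hx80 : (1:ℝ) ≤ X/80 := by linarith
      have hsq1 : (1:ℝ) ≤ Real.sqrt (X/80) := by
        rw [show (1:ℝ) = Real.sqrt 1 from Real.sqrt_one.symm]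
        exact Real.sqrt_le_sqrt hx80
      have hK1 : 1 ≤ K := Nat.le_floor (by exact_mod_cast hsq1)
      have hKge1 : (1:ℝ) ≤ (K:ℝ) := by exact_mod_cast hK1
      have hKle : (K:ℝ) ≤ Real.sqrt (X/80) := Nat.floor_le (Real.sqrt_nonneg _)
      have hx80' : (0:ℝ) ≤ X/80 := by linarith
      have hKsq : (K:ℝ)^2 ≤ X/80 := by
        nlinarith [Real.sq_sqrt hx80', Real.sqrt_nonneg (X/80), Nat.cast_nonneg (α := ℝ) K]
      have hKup : X/80 ≤ ((K:ℝ)+1)^2 := by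
        have h := Nat.lt_floor_add_one (Real.sqrt (X/80))
        nlinarith [Real.sq_sqrt hx80', Real.sqrt_nonneg (X/80)]
      have hNX : 4 * Real.pi ^ 2 * ((2*K^2 : ℕ):ℝ) ≤ X := by
        have hpisq : Real.pi^2 ≤ 10 := by nlinarith [Real.pi_lt_d2, Real.pi_pos]
        push_cast
        nlinarith [mul_le_mul_of_nonneg_right hpisq (sq_nonneg ((K:ℝ))), hKsq]
      have hTV := count_lower X (2*K^2) hNX
      have hrep := rep_lower K hK1
      set T : ℕ := countLE Sset X with hT
      have hTr : (0:ℝ) ≤ (T:ℝ) := Nat.cast_nonneg _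
      have h2K : 2*(K:ℝ) ≤ Real.sqrt X := by
        rw [show (2*(K:ℝ)) = Real.sqrt ((2*(K:ℝ))^2) from
          (Real.sqrt_sq (by positivity)).symm]
        apply Real.sqrt_le_sqrt
        nlinarith [hKsq]
      have hsqXX : Real.sqrt X ≤ X := by
        have h := Real.sqrt_le_sqrt (show X ≤ X^2 by nlinarith)
        rwa [Real.sqrt_sq hX0.le] at h
      have hK2pos : (0:ℝ) < 2*(K:ℝ) := by linarith
      have hlog2K : Real.log (2*(K:ℝ)) ≤ Real.log X :=
        Real.log_le_log hK2pos (h2K.trans hsqXX)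
      have hlog2K0 : (0:ℝ) ≤ 1 + Real.log (2*(K:ℝ)) := by
        have h2k1 : (1:ℝ) ≤ 2*(K:ℝ) := by linarith
        linarith [Real.log_nonneg h2k1]
      have hQ : ((K:ℝ)+1)^2 + 2*(2*(K:ℝ) * (1 + Real.log (2*(K:ℝ))))^2
          ≤ 9*X*(Real.log X)^2 := by
        have h1 : ((K:ℝ)+1)^2 ≤ X := by nlinarith [hKsq]
        have h2 : 2*(K:ℝ) * (1 + Real.log (2*(K:ℝ))) ≤ Real.sqrt X * (2 * Real.log X) := by
          apply mul_le_mul h2K (by linarith) hlog2K0 (Real.sqrt_nonneg X)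
        have h3 : (2*(K:ℝ) * (1 + Real.log (2*(K:ℝ))))^2 ≤ (Real.sqrt X * (2 * Real.log X))^2 := by
          apply pow_le_pow_left₀ (by positivity) h2
        have h4 : (Real.sqrt X * (2 * Real.log X))^2 = 4 * X * (Real.log X)^2 := by
          rw [mul_pow, Real.sq_sqrt hX0.le]
          ring
        have h5 : (2*(K:ℝ) * (1 + Real.log (2*(K:ℝ))))^2 ≤ 4 * X * (Real.log X)^2 := h4 ▸ h3
        have hXlog : X ≤ X * (Real.log X)^2 := by
          have h9 : (1:ℝ) ≤ (Real.log X)^2 := by nlinarith [hlog1]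
          nlinarith [mul_le_mul_of_nonneg_left h9 hX0.le]
        linarith [h1, h5, hXlog]
      have hchain : (X/80)^2 ≤ (T:ℝ) * (9*X*(Real.log X)^2) := by
        have s1 : (X/80)^2 ≤ (((K:ℝ)+1)^2)^2 := by
          apply pow_le_pow_left₀ (by positivity) hKup
        have s2 := hrep
        have s3 : ((((Finset.range (2*K^2+1)).filter IsSum2Sq).card : ℕ):ℝ) ≤ (T:ℝ) := by
          exact_mod_cast hTV
        have hQ0 : (0:ℝ) ≤ ((K:ℝ)+1)^2 + 2*(2*(K:ℝ) * (1 + Real.log (2*(K:ℝ))))^2 := by positivity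
        calc (X/80)^2 ≤ (((K:ℝ)+1)^2)^2 := s1
          _ ≤ ((((Finset.range (2*K^2+1)).filter IsSum2Sq).card : ℕ):ℝ) *
              (((K:ℝ)+1)^2 + 2*(2*(K:ℝ) * (1 + Real.log (2*(K:ℝ))))^2) := s2
          _ ≤ (T:ℝ) * (((K:ℝ)+1)^2 + 2*(2*(K:ℝ) * (1 + Real.log (2*(K:ℝ))))^2) :=
              mul_le_mul_of_nonneg_right s3 hQ0
          _ ≤ (T:ℝ) * (9*X*(Real.log X)^2) := mul_le_mul_of_nonneg_left hQ hTr
      have hTX : X ≤ 57600 * (T:ℝ) * (Real.log X)^2 := by nlinarith [hchain, hX0]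
      have hTpos : (0:ℝ) < (T:ℝ) := by
        rcases hTr.eq_or_lt with h | h
        · exfalso
          rw [← h] at hTX
          norm_num at hTX
          linarith
        · exact h
      refine ⟨hTpos, ?_⟩
      rw [div_le_iff₀ hTpos]
      have hbad := bad_count δ ε hδ0 hδ1 hε0 X hX2
      have hstep : 405 * X ^ a ≤ (405*57600 * X ^ (a-1) * (Real.log X)^2) * (T:ℝ) := by
        have e1 : X ^ a = X ^ (a-1) * X := by
          rw [← Real.rpow_add_one hX0.ne' (a-1)]
          norm_num
        rw [e1]
        have hXa1 : (0:ℝ) ≤ X ^ (a-1) := by positivity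
        calc 405 * (X ^ (a-1) * X) ≤ 405 * (X ^ (a-1) * (57600 * (T:ℝ) * (Real.log X)^2)) := by
              apply mul_le_mul_of_nonneg_left _ (by norm_num)
              exact mul_le_mul_of_nonneg_left hTX hXa1
          _ = (405*57600 * X ^ (a-1) * (Real.log X)^2) * (T:ℝ) := by ring
      have hlogb : Real.log X ≤ X ^ b / b := Real.log_le_rpow_div hX0.le hb0
      have hfin : 405*57600 * X ^ (a-1) * (Real.log X)^2 ≤ c5 * X ^ (-((1-a)/2)) := by
        have h5 : (Real.log X)^2 ≤ (X ^ b / b)^2 := pow_le_pow_left₀ hlog0 hlogb 2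
        have h6 : 405*57600 * X ^ (a-1) * (Real.log X)^2
            ≤ 405*57600 * X ^ (a-1) * (X ^ b / b)^2 := by
          apply mul_le_mul_of_nonneg_left h5 (by positivity)
        have h7 : 405*57600 * X ^ (a-1) * (X ^ b / b)^2 = c5 * (X ^ (a-1) * (X ^ b)^2) := by
          rw [hc5]
          field_simp
        have h8 : X ^ (a-1) * (X ^ b)^2 = X ^ (-((1-a)/2)) := by
          rw [← Real.rpow_natCast (X ^ b) 2, ← Real.rpow_mul hX0.le, ← Real.rpow_add hX0]
          congr 1
          rw [hb]
          push_cast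
          ring
        rw [h7, h8] at h6
        exact h6
      calc (countLE (Sset \ goodSet δ ε) X : ℝ) ≤ 405 * X ^ a := hbad
        _ ≤ (405*57600 * X ^ (a-1) * (Real.log X)^2) * (T:ℝ) := hstep
        _ ≤ (c5 * X ^ (-((1-a)/2))) * (T:ℝ) := mul_le_mul_of_nonneg_right hfin hTr
    have hzero : Tendsto (fun X : ℝ => (countLE (Sset \ goodSet δ ε) X : ℝ) /
        (countLE Sset X : ℝ)) atTop (nhds 0) := by
      apply squeeze_zero' (Filter.Eventually.of_forall fun X => by positivity)
        (hkey.mono fun X h => h.2)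
      have := (tendsto_rpow_neg_atTop (show (0:ℝ) < (1-a)/2 by linarith)).const_mul c5
      simpa using this
    unfold HasDensityOne
    have heq : ∀ᶠ X : ℝ in atTop,
        1 - (countLE (Sset \ goodSet δ ε) X : ℝ) / (countLE Sset X : ℝ)
          = (countLE (goodSet δ ε) X : ℝ) / (countLE Sset X : ℝ) := by
      filter_upwards [hkey] with X hx
      have hsplit := countLE_split (goodSet δ ε) hgoodsub X
      have hcast : (countLE Sset X : ℝ)
          = (countLE (goodSet δ ε) X : ℝ) + (countLE (Sset \ goodSet δ ε) X : ℝ) := by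
        exact_mod_cast hsplit
      have hTpos := hx.1
      field_simp
      linarith
    have hfinal := (tendsto_const_nhds.sub hzero).congr' heq
    simpa using hfinal
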